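/- If (M, ρ) is an additive finite pseudo-metric space, then the weight of its minimal filling equals the half-perimeter of the space: mf(M, ρ) = p(M, ρ). -/

import Mathlib

set_option linter.unusedSectionVars false
set_option maxHeartbeats 1000000

open SimpleGraph Finset

structure IsPseudoMetric {M : Type} (ρ : M → M → ℝ) : Prop where
  nonneg : ∀ p q, 0 ≤ ρ p q
  refl : ∀ p, ρ p p = 0
  symm : ∀ p q, ρ p q = ρ q p
  triangle : ∀ p q r, ρ p r ≤ ρ p q + ρ q r

/-- A tree joining a finite set `M`: a finite tree `G = (V, E)` with an injection `ι : M → V`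
such that every vertex of degree 1 or 2 lies in the image of `M`. -/
structure Frame (M : Type) where
  V : Type
  [fin : Fintype V]
  [deq : DecidableEq V]
  G : SimpleGraph V
  [dec : DecidableRel G.Adj]
  tree : G.IsTree
  ι : M → V
  inj : Function.Injective ι
  joins : ∀ v : V, G.degree v = 1 ∨ G.degree v = 2 → v ∈ Set.range ι

attribute [instance] Frame.fin Frame.deq Frame.dec

namespace Frame

variable {M : Type}

/-- The unique path between two vertices of the tree. -/
noncomputable def path (F : Frame M) (u v : F.V) : F.G.Walk u v :=
  (F.tree.existsUnique_path u v).exists.choose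

/-- `d_ω(u,v)`: the sum of the weights of the edges of the unique path from `u` to `v`. -/
noncomputable def dist (F : Frame M) (w : Sym2 F.V → ℝ) (u v : F.V) : ℝ :=
  ((F.path u v).edges.map w).sum

/-- `ω(G)`: the total weight of all edges of the tree. -/
noncomputable def weight (F : Frame M) (w : Sym2 F.V → ℝ) : ℝ :=
  ∑ e ∈ F.G.edgeFinset, w e

/-- `(G, ω)` is a filling of `(M, ρ)`: nonnegative weights and `ρ p q ≤ d_ω(ι p, ι q)`. -/
def IsFilling (F : Frame M) (w : Sym2 F.V → ℝ) (ρ : M → M → ℝ) : Prop :=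
  (∀ e ∈ F.G.edgeFinset, 0 ≤ w e) ∧
  ∀ p q : M, ρ p q ≤ F.dist w (F.ι p) (F.ι q)

end Frame

/-- `mf(M,ρ)`: the infimum of weights of fillings of `(M, ρ)`. -/
noncomputable def mf {M : Type} (ρ : M → M → ℝ) : ℝ :=
  sInf { x | ∃ F : Frame M, ∃ w : Sym2 F.V → ℝ, F.IsFilling w ρ ∧ F.weight w = x }

/-- A minimal filling: a filling whose weight equals `mf(M,ρ)`. -/
def IsMinFilling {M : Type} (F : Frame M) (w : Sym2 F.V → ℝ) (ρ : M → M → ℝ) : Prop :=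
  F.IsFilling w ρ ∧ F.weight w = mf ρ

/-- A generating tree for `(M, ρ)`: a weighted tree joining `M` with nonnegative weights
whose induced distance on `M` coincides with `ρ`. -/
def IsGenerating {M : Type} (F : Frame M) (w : Sym2 F.V → ℝ) (ρ : M → M → ℝ) : Prop :=
  (∀ e ∈ F.G.edgeFinset, 0 ≤ w e) ∧
  ∀ p q : M, F.dist w (F.ι p) (F.ι q) = ρ p q

/-- A finite pseudo-metric space is additive if it possesses a generating tree. -/
def IsAdditive {M : Type} (ρ : M → M → ℝ) : Prop :=
  ∃ (F : Frame M) (w : Sym2 F.V → ℝ), IsGenerating F w ρ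

/-- A cyclic order on `M`: a permutation acting transitively (a single cycle through all of `M`). -/
def IsCyclicOrder {M : Type} (π : Equiv.Perm M) : Prop :=
  ∀ p q : M, ∃ n : ℕ, (π ^ n) p = q

/-- The half-perimeter of the space: half the minimum over all cyclic orders of the perimeter. -/
noncomputable def halfPerimSpace {M : Type} [Fintype M] (ρ : M → M → ℝ) : ℝ :=
  sInf { x | ∃ σ : Equiv.Perm M, IsCyclicOrder σ ∧ x = (∑ p : M, ρ p (σ p)) / 2 }


section ListCost
variable {α : Type*} (d : α → α → ℝ)

/-- cost of the path a :: l ending at b -/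
def pCost : α → List α → α → ℝ
  | a, [], b => d a b
  | a, x :: t, b => d a x + pCost x t b

/-- cost of the closed tour through l -/
def tourCost : List α → ℝ
  | [] => 0
  | a :: t => pCost d a t a

variable {d}

@[simp] lemma pCost_nil (a b : α) : pCost d a [] b = d a b := rfl
@[simp] lemma pCost_cons (a x b : α) (t : List α) :
    pCost d a (x :: t) b = d a x + pCost d x t b := rfl
@[simp] lemma tourCost_nil : tourCost d ([] : List α) = 0 := rfl
@[simp] lemma tourCost_cons (a : α) (t : List α) :
    tourCost d (a :: t) = pCost d a t a := rfl

lemma pCost_nonneg (hd : ∀ a b, 0 ≤ d a b) : ∀ (l : List α) (a b), 0 ≤ pCost d a l b := by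
  intro l
  induction l with
  | nil => intro a b; simpa using hd a b
  | cons x t ih => intro a b; simpa using add_nonneg (hd a x) (ih x b)

lemma tourCost_nonneg (hd : ∀ a b, 0 ≤ d a b) (l : List α) : 0 ≤ tourCost d l := by
  cases l with
  | nil => simp [tourCost]
  | cons a t => simpa using pCost_nonneg hd t a a

variable (htri : ∀ a b c, d a c ≤ d a b + d b c)
include htri

lemma pCost_le_insert : ∀ (l : List α) (a x b : α), pCost d a l b ≤ d a x + pCost d x l b := by
  intro l
  induction l with
  | nil => intro a x b; simpa using htri a x b
  | cons y t _ =>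
    intro a x b
    simp only [pCost_cons, ← add_assoc]
    exact add_le_add_left (htri a x y) _

lemma pCost_mono_sublist : ∀ {l' l : List α}, List.Sublist l' l → ∀ a b, pCost d a l' b ≤ pCost d a l b := by
  intro l' l h
  induction h with
  | slnil => intro a b; exact le_rfl
  | cons x h ih =>
    intro a b
    calc pCost d a _ b ≤ pCost d a _ b := ih a b
    _ ≤ d a x + pCost d x _ b := pCost_le_insert htri _ a x b
    _ = pCost d a (x :: _) b := rfl
  | cons_cons x h ih =>
    intro a b
    simpa using add_le_add_left (ih x b) (d a x)

omit htri

lemma pCost_append (l : List α) : ∀ (a c b : α), pCost d a (l ++ [c]) b = pCost d a l c + d c b := by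
  induction l with
  | nil => intro a c b; simp
  | cons x t ih => intro a c b; simp [ih, add_assoc]

lemma tourCost_rot (a : α) (t : List α) : tourCost d (a :: t) = tourCost d (t ++ [a]) := by
  cases t with
  | nil => simp
  | cons x s =>
    show pCost d a (x :: s) a = tourCost d (x :: (s ++ [a]))
    rw [tourCost_cons, pCost_cons, pCost_append]
    ring

lemma tourCost_append_comm : ∀ (l₁ l₂ : List α), tourCost d (l₁ ++ l₂) = tourCost d (l₂ ++ l₁) := by
  intro l₁
  induction l₁ with
  | nil => simp
  | cons a t ih =>
    intro l₂
    calc tourCost d ((a :: t) ++ l₂) = tourCost d (a :: (t ++ l₂)) := by simp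
    _ = tourCost d ((t ++ l₂) ++ [a]) := tourCost_rot a _
    _ = tourCost d (t ++ (l₂ ++ [a])) := by rw [List.append_assoc]
    _ = tourCost d ((l₂ ++ [a]) ++ t) := ih _
    _ = tourCost d (l₂ ++ (a :: t)) := by simp

lemma pCost_map {β : Type*} (f : β → α) : ∀ (l : List β) (a b : β),
    pCost d (f a) (l.map f) (f b) = pCost (fun x y => d (f x) (f y)) a l b := by
  intro l
  induction l with
  | nil => intro a b; simp
  | cons x t ih => intro a b; simp [ih]

lemma tourCost_map {β : Type*} (f : β → α) (l : List β) :
    tourCost d (l.map f) = tourCost (fun x y => d (f x) (f y)) l := by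
  cases l with
  | nil => simp
  | cons a t => simpa using pCost_map f t a a


lemma pCost_eq_zip_sum : ∀ (t : List α) (a b : α),
    pCost d a t b = (((a :: t).zip (t ++ [b])).map (fun x => d x.1 x.2)).sum := by
  intro t
  induction t with
  | nil => intro a b; simp [pCost]
  | cons x s ih => intro a b; simp [pCost, ih x b]

lemma map_formPerm_eq_zip [DecidableEq α] (a : α) (t : List α) (h : (a :: t).Nodup) :
    (a :: t).map (fun p => d p ((a :: t).formPerm p)) =
      ((a :: t).zip (t ++ [a])).map (fun x => d x.1 x.2) := by
  set m := a :: t with hm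
  have hlen : (t ++ [a]).length = m.length := by simp [hm]
  apply List.ext_getElem
  · simp [hm, Nat.min_def]
  intro i hi₁ hi₂
  have him : i < m.length := by simpa [hm] using hi₁
  simp only [List.getElem_map, List.getElem_zip]
  rw [List.formPerm_apply_getElem m h i him]
  congr 1
  have hzl : i < m.length := him
  -- (t ++ [a])[i] = m[(i+1) % m.length]
  rcases lt_or_eq_of_le (Nat.le_of_lt_succ (by simpa [hm] using him)) with hlt | heq
  · have : (i + 1) % m.length = i + 1 := Nat.mod_eq_of_lt (by simp [hm]; omega)
    simp only [this]
    rw [List.getElem_append_left (by simpa using hlt)]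
    simp [hm]
  · have hmlen : m.length = t.length + 1 := by simp [hm]
    have : (i + 1) % m.length = 0 := by rw [heq, hmlen]; simp
    simp only [this]
    rw [List.getElem_append_right (by omega)]
    simp [hm, heq]


end ListCost




section Tree
variable {V : Type} [Fintype V] [DecidableEq V] {G : SimpleGraph V}

noncomputable def tPath (hG : G.IsTree) (u v : V) : G.Walk u v :=
  (hG.existsUnique_path u v).exists.choose

lemma tPath_isPath (hG : G.IsTree) (u v : V) : (tPath hG u v).IsPath :=
  (hG.existsUnique_path u v).exists.choose_spec

lemma tPath_unique (hG : G.IsTree) {u v : V} (p : G.Walk u v) (hp : p.IsPath) :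
    tPath hG u v = p :=
  ((hG.existsUnique_path u v).unique (tPath_isPath hG u v) hp)

noncomputable def tDist (hG : G.IsTree) (w : Sym2 V → ℝ) (u v : V) : ℝ :=
  ((tPath hG u v).edges.map w).sum

lemma tDist_eq (hG : G.IsTree) (w : Sym2 V → ℝ) {u v : V} (p : G.Walk u v) (hp : p.IsPath) :
    tDist hG w u v = (p.edges.map w).sum := by
  rw [tDist, tPath_unique hG p hp]

@[simp] lemma tDist_self (hG : G.IsTree) (w : Sym2 V → ℝ) (u : V) : tDist hG w u u = 0 := by
  rw [tDist_eq hG w Walk.nil Walk.IsPath.nil]; simp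

lemma tDist_symm (hG : G.IsTree) (w : Sym2 V → ℝ) (u v : V) :
    tDist hG w u v = tDist hG w v u := by
  rw [tDist_eq hG w ((tPath hG v u).reverse) ((tPath_isPath hG v u).reverse), tDist]
  rw [Walk.edges_reverse, List.map_reverse, List.sum_reverse]

lemma sum_map_le_of_subset (w : Sym2 V → ℝ) {l₁ l₂ : List (Sym2 V)} (h₁ : l₁.Nodup)
    (hsub : l₁ ⊆ l₂) (hnn : ∀ e ∈ l₂, 0 ≤ w e) : (l₁.map w).sum ≤ (l₂.map w).sum := by
  have hle : (l₁ : Multiset (Sym2 V)) ≤ (l₂ : Multiset (Sym2 V)) := by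
    rw [Multiset.le_iff_count]
    intro e
    by_cases he : e ∈ l₁
    · calc Multiset.count e (l₁ : Multiset _) ≤ 1 := by
            rw [Multiset.coe_count]; exact List.nodup_iff_count_le_one.mp h₁ e
      _ ≤ Multiset.count e (l₂ : Multiset _) := by
            rw [Multiset.coe_count]; exact List.count_pos_iff.mpr (hsub he)
    · simp [Multiset.coe_count, List.count_eq_zero_of_not_mem he]
  obtain ⟨t, ht⟩ := Multiset.le_iff_exists_add.mp hle
  have : ((l₂ : Multiset _).map w).sum = ((l₁ : Multiset _).map w).sum + (t.map w).sum := by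
    rw [ht, Multiset.map_add, Multiset.sum_add]
  have h0 : 0 ≤ (t.map w).sum := by
    apply Multiset.sum_nonneg
    intro x hx
    obtain ⟨e, he, rfl⟩ := Multiset.mem_map.mp hx
    have : e ∈ (l₂ : Multiset (Sym2 V)) := by rw [ht]; exact Multiset.mem_add.mpr (Or.inr he)
    exact hnn e (Multiset.mem_coe.mp this)
  have e1 : (l₁.map w).sum = ((l₁ : Multiset _).map w).sum := by simp
  have e2 : (l₂.map w).sum = ((l₂ : Multiset _).map w).sum := by simp
  rw [e1, e2, this]; linarith

lemma tDist_le_walk (hG : G.IsTree) {w : Sym2 V → ℝ} (hnn : ∀ e ∈ G.edgeSet, 0 ≤ w e)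
    {u v : V} (q : G.Walk u v) : tDist hG w u v ≤ (q.edges.map w).sum := by
  rw [tDist_eq hG w q.bypass q.bypass_isPath]
  exact sum_map_le_of_subset w (q.bypass_isPath.isTrail.edges_nodup)
    q.edges_bypass_subset (fun e he => hnn e (q.edges_subset_edgeSet he))

lemma tDist_triangle (hG : G.IsTree) {w : Sym2 V → ℝ} (hnn : ∀ e ∈ G.edgeSet, 0 ≤ w e)
    (u v x : V) : tDist hG w u x ≤ tDist hG w u v + tDist hG w v x := by
  have := tDist_le_walk hG hnn ((tPath hG u v).append (tPath hG v x))
  rwa [Walk.edges_append, List.map_append, List.sum_append, ← tDist, ← tDist] at this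

lemma tDist_nonneg (hG : G.IsTree) {w : Sym2 V → ℝ} (hnn : ∀ e ∈ G.edgeSet, 0 ≤ w e)
    (u v : V) : 0 ≤ tDist hG w u v := by
  apply List.sum_nonneg
  intro x hx
  obtain ⟨e, he, rfl⟩ := List.mem_map.mp hx
  exact hnn e ((tPath hG u v).edges_subset_edgeSet he)

lemma tDist_adj (hG : G.IsTree) (w : Sym2 V → ℝ) {u v : V} (h : G.Adj u v) :
    tDist hG w u v = w s(u, v) := by
  have hp : (Walk.cons h Walk.nil).IsPath := by
    rw [Walk.cons_isPath_iff]
    exact ⟨Walk.IsPath.nil, by simp [h.ne]⟩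
  rw [tDist_eq hG w _ hp]; simp

lemma tDist_eq_sum_edgeFinset (hG : G.IsTree) (w : Sym2 V → ℝ) [DecidableRel G.Adj] (u v : V) :
    tDist hG w u v = ∑ e ∈ G.edgeFinset, if e ∈ (tPath hG u v).edges then w e else 0 := by
  rw [← Finset.sum_filter]
  have hfe : G.edgeFinset.filter (fun e => e ∈ (tPath hG u v).edges) =
      (tPath hG u v).edges.toFinset := by
    ext e
    simp only [Finset.mem_filter, List.mem_toFinset, mem_edgeFinset]
    exact ⟨fun h => h.2, fun h => ⟨(tPath hG u v).edges_subset_edgeSet h, h⟩⟩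
  rw [hfe, List.sum_toFinset w ((tPath_isPath hG u v).isTrail.edges_nodup)]
  rfl

end Tree

section Side
variable {V : Type} [Fintype V] [DecidableEq V] {G : SimpleGraph V}

/-- `x` is on the `u`-side of the edge `s(u,v)`:
there is a walk from `u` to `x` avoiding the edge. -/
def SideOf (G : SimpleGraph V) (u v x : V) : Prop :=
  ∃ p : G.Walk u x, s(u, v) ∉ p.edges

lemma sideOf_self (u v : V) : SideOf G u v u := ⟨Walk.nil, by simp⟩

lemma walk_mem_edges_of_adj (hG : G.IsTree) {u v : V} (h : G.Adj u v) (p : G.Walk u v) :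
    s(u, v) ∈ p.edges :=
  (isBridge_iff_adj_and_forall_walk_mem_edges.mp
    (isAcyclic_iff_forall_adj_isBridge.mp hG.2 h)) p

lemma not_sideOf_other (hG : G.IsTree) {u v : V} (h : G.Adj u v) : ¬ SideOf G u v v :=
  fun ⟨p, hp⟩ => hp (walk_mem_edges_of_adj hG h p)

lemma sideOf_extend {u v a b : V} (ha : SideOf G u v a) (q : G.Walk a b)
    (hq : s(u, v) ∉ q.edges) : SideOf G u v b := by
  obtain ⟨p, hp⟩ := ha
  refine ⟨p.append q, ?_⟩
  rw [Walk.edges_append, List.mem_append]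
  rintro (h | h)
  · exact hp h
  · exact hq h

lemma exists_walk_from_other {u v x : V} (p : G.Walk u x) (hp : p.IsPath)
    (he : s(u, v) ∈ p.edges) : ∃ q : G.Walk v x, s(u, v) ∉ q.edges := by
  cases p with
  | nil => simp at he
  | @cons _ y _ hadj rest =>
    rw [Walk.edges_cons, List.mem_cons] at he
    by_cases hy : s(u, v) = s(u, y)
    · have hvy : v = y := by
        rw [Sym2.eq_iff] at hy
        rcases hy with ⟨_, rfl⟩ | ⟨h1, h2⟩
        · rfl
        · exact absurd h1 hadj.ne
      subst hvy
      refine ⟨rest, ?_⟩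
      have hnd := hp.isTrail.edges_nodup
      rw [Walk.edges_cons] at hnd
      rw [hy]
      exact (List.nodup_cons.mp hnd).1
    · have hrest : s(u, v) ∈ rest.edges := he.resolve_left hy
      have hu : u ∈ rest.support := rest.fst_mem_support_of_mem_edges hrest
      rw [Walk.cons_isPath_iff] at hp
      exact absurd hu hp.2

lemma sideOf_total (hG : G.IsTree) {u v : V} (x : V) :
    SideOf G u v x ∨ SideOf G v u x := by
  by_cases hx : s(u, v) ∈ (tPath hG u x).edges
  · right
    obtain ⟨q, hq⟩ := exists_walk_from_other (tPath hG u x) (tPath_isPath hG u x) hx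
    exact ⟨q, by rwa [Sym2.eq_swap]⟩
  · left; exact ⟨tPath hG u x, hx⟩

lemma not_sideOf_both (hG : G.IsTree) {u v : V} (h : G.Adj u v) (x : V) :
    ¬(SideOf G u v x ∧ SideOf G v u x) := by
  rintro ⟨⟨p, hp⟩, ⟨q, hq⟩⟩
  have hm := walk_mem_edges_of_adj hG h (p.append q.reverse)
  rw [Walk.edges_append, List.mem_append, Walk.edges_reverse, List.mem_reverse] at hm
  rw [Sym2.eq_swap] at hq
  exact hm.elim hp hq

lemma mem_tPath_iff_side (hG : G.IsTree) {u v : V} (h : G.Adj u v) (a b : V) :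
    s(u, v) ∈ (tPath hG a b).edges ↔ ¬(SideOf G u v a ↔ SideOf G u v b) := by
  constructor
  · intro hmem hiff
    rcases sideOf_total hG (u := u) (v := v) a with hsa | hsa
    · have hsb : SideOf G u v b := hiff.mp hsa
      obtain ⟨p, hp⟩ := hsa; obtain ⟨q, hq⟩ := hsb
      have hWe : s(u, v) ∉ (p.reverse.append q).edges := by
        rw [Walk.edges_append, List.mem_append, Walk.edges_reverse, List.mem_reverse]
        rintro (h' | h')
        · exact hp h'
        · exact hq h'
      have heq : tPath hG a b = (p.reverse.append q).bypass :=
        tPath_unique hG _ (p.reverse.append q).bypass_isPath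
      rw [heq] at hmem
      exact hWe ((p.reverse.append q).edges_bypass_subset hmem)
    · have hsb' : SideOf G v u b := by
        rcases sideOf_total hG (u := u) (v := v) b with h' | h'
        · exact absurd ⟨hiff.mpr h', hsa⟩ (not_sideOf_both hG h a)
        · exact h'
      obtain ⟨p, hp⟩ := hsa; obtain ⟨q, hq⟩ := hsb'
      have hWe : s(u, v) ∉ (p.reverse.append q).edges := by
        rw [Walk.edges_append, List.mem_append, Walk.edges_reverse, List.mem_reverse]
        rintro (h' | h')
        · exact hp (by rwa [Sym2.eq_swap] at h')
        · exact hq (by rwa [Sym2.eq_swap] at h')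
      have heq : tPath hG a b = (p.reverse.append q).bypass :=
        tPath_unique hG _ (p.reverse.append q).bypass_isPath
      rw [heq] at hmem
      exact hWe ((p.reverse.append q).edges_bypass_subset hmem)
  · intro hne
    by_contra hmem
    apply hne
    constructor
    · intro hsa; exact sideOf_extend hsa (tPath hG a b) hmem
    · intro hsb
      refine sideOf_extend hsb (tPath hG b a) ?_
      have : tPath hG b a = (tPath hG a b).reverse :=
        tPath_unique hG _ ((tPath_isPath hG a b).reverse)
      rw [this, Walk.edges_reverse, List.mem_reverse]
      exact hmem

lemma exists_side_deg_one (hG : G.IsTree) [DecidableRel G.Adj] {u v : V} (h : G.Adj u v) :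
    ∃ y : V, SideOf G u v y ∧ G.degree y = 1 := by
  classical
  set L : V → ℕ := fun x => (tPath hG x v).length with hL
  set S : Finset V := univ.filter (fun x => SideOf G u v x) with hSdef
  have hu : u ∈ S := by simp [hSdef, sideOf_self]
  obtain ⟨y, hyS, hymax⟩ := S.exists_max_image L ⟨u, hu⟩
  have hySide : SideOf G u v y := by simpa [hSdef] using hyS
  have hyv : y ≠ v := fun h' => (not_sideOf_other hG h) (h' ▸ hySide)
  set P := tPath hG y v with hPdef
  have hPlen : 0 < P.length := by
    rcases Nat.eq_zero_or_pos P.length with h0 | h0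
    · exact absurd (Walk.eq_of_length_eq_zero h0) hyv
    · exact h0
  set z := P.getVert 1 with hz
  have hadjz : G.Adj y z := by
    have := P.adj_getVert_succ (i := 0) hPlen
    rwa [Walk.getVert_zero] at this
  have hLv : L v = 0 := by
    have : tPath hG v v = Walk.nil := tPath_unique hG _ Walk.IsPath.nil
    simp [hL, this]
  have hsub : G.neighborFinset y ⊆ {z} := by
    intro z' hz'
    rw [mem_neighborFinset] at hz'
    rw [Finset.mem_singleton]
    by_cases hLz : L y < L z'
    · exfalso
      have hz'v : z' ≠ v := by
        rintro rfl
        rw [hLv] at hLz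
        omega
      have hedge : s(u, v) ≠ s(y, z') := by
        intro hEq
        rw [Sym2.eq_iff] at hEq
        rcases hEq with ⟨rfl, rfl⟩ | ⟨rfl, rfl⟩
        · exact hz'v rfl
        · exact hyv rfl
      have hz'S : SideOf G u v z' := by
        refine sideOf_extend hySide (Walk.cons hz' Walk.nil) ?_
        rw [Walk.edges_cons, List.mem_cons]
        rintro (h' | h')
        · exact hedge h'
        · simp at h'
      have : z' ∈ S := by simp [hSdef, hz'S]
      exact absurd (hymax z' this) (by omega)
    · push_neg at hLz
      set Q := tPath hG z' v with hQdef
      have hQpath := tPath_isPath hG z' v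
      have hynQ : y ∉ Q.support := by
        intro hyQ
        have hdrop : (Q.dropUntil y hyQ).IsPath := hQpath.dropUntil hyQ
        have hdropEq : tPath hG y v = Q.dropUntil y hyQ := tPath_unique hG _ hdrop
        have hlen : (Q.takeUntil y hyQ).length + (Q.dropUntil y hyQ).length = Q.length := by
          rw [← Walk.length_append, Walk.take_spec]
        have hLy : L y = (Q.dropUntil y hyQ).length := by
          simp only [hL]
          exact congrArg Walk.length hdropEq
        have hLz' : L z' = Q.length := by simp only [hL, hQdef]
        have htake0 : (Q.takeUntil y hyQ).length = 0 := by omega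
        have hzy : z' = y := Walk.eq_of_length_eq_zero htake0
        exact hz'.ne hzy.symm
      have hcons : (Walk.cons hz' Q).IsPath := by
        rw [Walk.cons_isPath_iff]
        exact ⟨hQpath, hynQ⟩
      have hPeq : P = Walk.cons hz' Q := tPath_unique hG _ hcons
      rw [hz, hPeq]
      exact (by simpa using Walk.getVert_cons_succ (n := 0) Q hz' : (Walk.cons hz' Q).getVert 1 = z').symm
  have hdeg : G.degree y = 1 := by
    have h1 : G.neighborFinset y = {z} := by
      refine Finset.Subset.antisymm hsub ?_
      intro x hx
      rw [Finset.mem_singleton] at hx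
      subst hx
      rwa [mem_neighborFinset]
    rw [← card_neighborFinset_eq_degree, h1, Finset.card_singleton]
  exact ⟨y, hySide, hdeg⟩

end Side

section Crossing
variable {M : Type} [Fintype M]

lemma Frame.dist_eq_tDist (F : Frame M) (w : Sym2 F.V → ℝ) (a b : F.V) :
    F.dist w a b = tDist F.tree w a b := rfl

lemma Frame.exists_side (F : Frame M) {u v : F.V} (h : F.G.Adj u v) :
    ∃ p : M, SideOf F.G u v (F.ι p) := by
  obtain ⟨y, hside, hdeg⟩ := exists_side_deg_one F.tree h
  obtain ⟨p, rfl⟩ := F.joins y (Or.inl hdeg)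
  exact ⟨p, hside⟩

lemma crossing_count (F : Frame M) {σ : Equiv.Perm M} (hσ : IsCyclicOrder σ)
    {u v : F.V} (h : F.G.Adj u v) :
    2 ≤ (univ.filter fun p : M =>
      s(u, v) ∈ (tPath F.tree (F.ι p) (F.ι (σ p))).edges).card := by
  classical
  set c := (univ.filter fun p : M =>
      s(u, v) ∈ (tPath F.tree (F.ι p) (F.ι (σ p))).edges).card with hc
  set χ : M → ZMod 2 := fun p => if SideOf F.G u v (F.ι p) then 1 else 0 with hχ
  have key : ∀ p : M,
      (if s(u, v) ∈ (tPath F.tree (F.ι p) (F.ι (σ p))).edges then (1 : ZMod 2) else 0)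
        = χ (σ p) - χ p := by
    intro p
    by_cases h1 : SideOf F.G u v (F.ι p) <;> by_cases h2 : SideOf F.G u v (F.ι (σ p)) <;>
      simp [hχ, h1, h2, mem_tPath_iff_side F.tree h, iff_iff_implies_and_implies] <;> decide
  have hsum0 : (∑ p : M, if s(u, v) ∈ (tPath F.tree (F.ι p) (F.ι (σ p))).edges
      then (1 : ZMod 2) else 0) = 0 := by
    rw [Finset.sum_congr rfl (fun p _ => key p), Finset.sum_sub_distrib,
      Equiv.sum_comp σ χ, sub_self]
  have hcard : ((c : ZMod 2)) = 0 := by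
    rw [hc, ← Finset.sum_boole]
    exact hsum0
  have hdvd : 2 ∣ c := (ZMod.natCast_eq_zero_iff c 2).mp hcard
  have hpos : c ≠ 0 := by
    intro h0
    have hemp : ∀ p : M, s(u, v) ∉ (tPath F.tree (F.ι p) (F.ι (σ p))).edges := by
      intro p hp
      have : p ∈ univ.filter fun p : M =>
          s(u, v) ∈ (tPath F.tree (F.ι p) (F.ι (σ p))).edges := by
        simp [hp]
      rw [Finset.card_eq_zero] at h0
      rw [← hc] at *
      simp_all
    have hpres : ∀ p : M, SideOf F.G u v (F.ι p) ↔ SideOf F.G u v (F.ι (σ p)) := by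
      intro p
      by_contra hne
      exact hemp p ((mem_tPath_iff_side F.tree h _ _).mpr hne)
    obtain ⟨p₀, hp₀⟩ := F.exists_side h
    obtain ⟨q₀, hq₀'⟩ := F.exists_side h.symm
    have hq₀ : ¬ SideOf F.G u v (F.ι q₀) :=
      fun hs => not_sideOf_both F.tree h _ ⟨hs, hq₀'⟩
    obtain ⟨n, hn⟩ := hσ p₀ q₀
    have hall : ∀ k : ℕ, SideOf F.G u v (F.ι ((σ ^ k) p₀)) := by
      intro k
      induction k with
      | zero => simpa using hp₀
      | succ k ih =>
        have : (σ ^ (k + 1)) p₀ = σ ((σ ^ k) p₀) := by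
          rw [pow_succ' σ k]
          rfl
        rw [this]
        exact (hpres _).mp ih
    have := hall n
    rw [hn] at this
    exact hq₀ this
  have : 0 < c := Nat.pos_of_ne_zero hpos
  exact Nat.le_of_dvd this hdvd

lemma two_weight_le_sum_tDist (F : Frame M) {w : Sym2 F.V → ℝ}
    (hw : ∀ e ∈ F.G.edgeFinset, 0 ≤ w e) {σ : Equiv.Perm M} (hσ : IsCyclicOrder σ) :
    2 * F.weight w ≤ ∑ p : M, tDist F.tree w (F.ι p) (F.ι (σ p)) := by
  classical
  have hstep : ∀ p : M, tDist F.tree w (F.ι p) (F.ι (σ p)) =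
      ∑ e ∈ F.G.edgeFinset, if e ∈ (tPath F.tree (F.ι p) (F.ι (σ p))).edges then w e else 0 :=
    fun p => tDist_eq_sum_edgeFinset F.tree w _ _
  rw [Finset.sum_congr rfl (fun p _ => hstep p), Finset.sum_comm]
  rw [Frame.weight, Finset.mul_sum]
  refine Finset.sum_le_sum ?_
  intro e he
  induction e using Sym2.ind with
  | _ u v =>
    have hadj : F.G.Adj u v := (mem_edgeFinset.mp he)
    have hrw : (∑ p : M, if s(u, v) ∈ (tPath F.tree (F.ι p) (F.ι (σ p))).edges
        then w s(u, v) else 0) =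
        ((univ.filter fun p : M =>
          s(u, v) ∈ (tPath F.tree (F.ι p) (F.ι (σ p))).edges).card : ℝ) * w s(u, v) := by
      rw [← Finset.sum_filter, Finset.sum_const, nsmul_eq_mul]
    rw [hrw]
    have hcross := crossing_count F hσ hadj
    have h2 : (2 : ℝ) ≤ ((univ.filter fun p : M =>
        s(u, v) ∈ (tPath F.tree (F.ι p) (F.ι (σ p))).edges).card : ℝ) := by
      exact_mod_cast hcross
    exact mul_le_mul_of_nonneg_right h2 (hw _ he)

end Crossing

section Tour
variable {V : Type} [Fintype V] [DecidableEq V] {G : SimpleGraph V}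

lemma not_mem_tPath_support [DecidableRel G.Adj] (hG : G.IsTree) {v u : V}
    (hnb : G.neighborFinset v = {u}) {x y : V} (hx : x ≠ v) (hy : y ≠ v) :
    v ∉ (tPath hG x y).support := by
  intro hv
  set P := tPath hG x y with hP
  have hPpath : P.IsPath := tPath_isPath hG x y
  set q := P.takeUntil v hv with hq
  set r := P.dropUntil v hv with hr
  have hqpath : q.IsPath := hPpath.takeUntil hv
  have hrpath : r.IsPath := hPpath.dropUntil hv
  have hqlen : 0 < q.length := by
    rcases Nat.eq_zero_or_pos q.length with h0 | h0
    · exact absurd (Walk.eq_of_length_eq_zero h0) hx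
    · exact h0
  have hrlen : 0 < r.length := by
    rcases Nat.eq_zero_or_pos r.length with h0 | h0
    · exact absurd (Walk.eq_of_length_eq_zero h0).symm hy
    · exact h0
  -- the vertex after v in r is u
  have hadjr : G.Adj v (r.getVert 1) := by
    have := r.adj_getVert_succ (i := 0) hrlen
    rwa [Walk.getVert_zero] at this
  have hru : r.getVert 1 = u := by
    have : r.getVert 1 ∈ G.neighborFinset v := by rwa [mem_neighborFinset]
    rw [hnb] at this
    exact Finset.mem_singleton.mp this
  have hur : u ∈ r.support := by
    rw [Walk.mem_support_iff_exists_getVert]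
    exact ⟨1, hru, by omega⟩
  -- the vertex before v in q is u
  have hadjq : G.Adj v (q.reverse.getVert 1) := by
    have h0 : 0 < q.reverse.length := by rwa [Walk.length_reverse]
    have := q.reverse.adj_getVert_succ (i := 0) h0
    rwa [Walk.getVert_zero] at this
  have hqu : q.reverse.getVert 1 = u := by
    have : q.reverse.getVert 1 ∈ G.neighborFinset v := by rwa [mem_neighborFinset]
    rw [hnb] at this
    exact Finset.mem_singleton.mp this
  have huq : u ∈ q.support := by
    have : u ∈ q.reverse.support := by
      rw [Walk.mem_support_iff_exists_getVert]
      exact ⟨1, hqu, by rw [Walk.length_reverse]; omega⟩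
    rwa [Walk.support_reverse, List.mem_reverse] at this
  have hunev : u ≠ v := by rw [← hru]; exact hadjr.ne'
  have hurt : u ∈ r.support.tail := by
    have hcons : r.support = v :: r.support.tail := r.support_eq_cons
    rw [hcons, List.mem_cons] at hur
    rcases hur with h | h
    · exact absurd h hunev
    · exact h
  have hnd : P.support.Nodup := hPpath.support_nodup
  have hPsplit : P.support = q.support ++ r.support.tail := by
    conv_lhs => rw [← Walk.take_spec P hv]
    exact Walk.support_append _ _
  rw [hPsplit] at hnd
  exact (List.disjoint_of_nodup_append hnd) huq hurt

lemma reach_comap {v : V} : ∀ {x y : V} (P : G.Walk x y),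
    (∀ z ∈ P.support, z ≠ v) → ∀ (hx : x ≠ v) (hy : y ≠ v),
    (SimpleGraph.comap (Subtype.val : {a : V // a ≠ v} → V) G).Reachable ⟨x, hx⟩ ⟨y, hy⟩ := by
  intro x y P
  induction P with
  | nil =>
    intro _ hx hy
    exact Reachable.refl _
  | @cons a b c hadj P ih =>
    intro h hx hy
    have hb : b ≠ v := h b (by simp)
    have hstep : (SimpleGraph.comap (Subtype.val : {a : V // a ≠ v} → V) G).Adj ⟨a, hx⟩ ⟨b, hb⟩ :=
      hadj
    exact (hstep.reachable).trans (ih (fun z hz => h z (by simp [hz])) hb hy)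

lemma tree_tour : ∀ (n : ℕ) (V : Type) [Fintype V] [DecidableEq V] (G : SimpleGraph V)
    [DecidableRel G.Adj], Fintype.card V = n → ∀ (hG : G.IsTree) (w : Sym2 V → ℝ),
    (∀ e ∈ G.edgeSet, 0 ≤ w e) →
    ∃ l : List V, l.Nodup ∧ (∀ x : V, x ∈ l) ∧
      tourCost (tDist hG w) l ≤ 2 * ∑ e ∈ G.edgeFinset, w e := by
  intro n
  induction n using Nat.strong_induction_on with
  | _ n ih =>
    intro V _ _ G _ hcard hG w hw
    have hne : Nonempty V := hG.isConnected.nonempty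
    have hwsum : 0 ≤ ∑ e ∈ G.edgeFinset, w e :=
      Finset.sum_nonneg fun e he => hw e (mem_edgeFinset.mp he)
    by_cases hcard1 : Fintype.card V = 1
    · obtain ⟨v, hv⟩ := Fintype.card_eq_one_iff.mp hcard1
      refine ⟨[v], by simp, fun x => by simp [hv x], ?_⟩
      have : tourCost (tDist hG w) [v] = 0 := by simp [tourCost, pCost]
      rw [this]; linarith
    · have h2 : 2 ≤ Fintype.card V := by
        have := Fintype.card_pos (α := V)
        omega
      -- find a leaf
      have hdegsum := G.sum_degrees_eq_twice_card_edges
      have hedges := hG.card_edgeFinset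
      have hexist : ∃ v : V, G.degree v ≤ 1 := by
        by_contra hcon
        push_neg at hcon
        have hlow : 2 * Fintype.card V ≤ ∑ v : V, G.degree v := by
          calc 2 * Fintype.card V = ∑ _v : V, 2 := by
                rw [Finset.sum_const, Finset.card_univ, smul_eq_mul, mul_comm]
          _ ≤ ∑ v : V, G.degree v := Finset.sum_le_sum fun v _ => hcon v
        omega
      obtain ⟨v, hvdeg⟩ := hexist
      have hdegpos : 0 < G.degree v := by
        rw [G.degree_pos_iff_exists_adj]
        obtain ⟨x, hxv⟩ := Fintype.exists_ne_of_one_lt_card (by omega) v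
        have hreach := (hG.isConnected.preconnected v x).some
        have hlen : 0 < hreach.length := by
          rcases Nat.eq_zero_or_pos hreach.length with h0 | h0
          · exact absurd (Walk.eq_of_length_eq_zero h0).symm hxv
          · exact h0
        have := hreach.adj_getVert_succ (i := 0) hlen
        rw [Walk.getVert_zero] at this
        exact ⟨_, this⟩
      have hvdeg1 : G.degree v = 1 := by omega
      obtain ⟨u, hnb⟩ := Finset.card_eq_one.mp (by
        rw [G.card_neighborFinset_eq_degree]; exact hvdeg1)
      have hadj_vu : G.Adj v u := by
        rw [← mem_neighborFinset, hnb]; exact Finset.mem_singleton_self u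
      have hune : u ≠ v := hadj_vu.ne'
      -- the induced subgraph on V \ {v}
      set G' : SimpleGraph {x : V // x ≠ v} := SimpleGraph.comap Subtype.val G with hG'def
      haveI : DecidableRel G'.Adj := by rw [hG'def]; intro a b; exact inferInstanceAs (Decidable (G.Adj a.1 b.1))
      let fhom : G' →g G := ⟨Subtype.val, fun {a b} h => h⟩
      have hval_inj : Function.Injective (Subtype.val : {x : V // x ≠ v} → V) :=
        Subtype.val_injective
      have hfhom_inj : Function.Injective ⇑fhom := fun a b h => Subtype.ext h
      have htree' : G'.IsTree := by
        constructor
        · rw [connected_iff]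
          constructor
          · intro x y
            have hsup : ∀ z ∈ (tPath hG x.1 y.1).support, z ≠ v := by
              intro z hz hzv
              exact not_mem_tPath_support hG hnb x.2 y.2 (hzv ▸ hz)
            have := reach_comap (G := G) (v := v) (tPath hG x.1 y.1) hsup x.2 y.2
            exact this
          · exact ⟨⟨u, hune⟩⟩
        · intro a c hc
          exact hG.2 (c.map fhom) ((Walk.map_isCycle_iff_of_injective hfhom_inj).mpr hc)
      set w' : Sym2 {x : V // x ≠ v} → ℝ := fun e => w (Sym2.map Subtype.val e) with hw'def
      have hw' : ∀ e ∈ G'.edgeSet, 0 ≤ w' e := by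
        intro e he
        induction e using Sym2.ind with
        | _ a b =>
          have hadj : G.Adj a.1 b.1 := (SimpleGraph.mem_edgeSet _).mp he
          show 0 ≤ w (Sym2.map Subtype.val s(a, b))
          rw [Sym2.map_pair_eq]
          exact hw _ ((SimpleGraph.mem_edgeSet _).mpr hadj)
      have hd' : ∀ x y : {a : V // a ≠ v},
          tDist htree' w' x y = tDist hG w x.1 y.1 := by
        intro x y
        have hmap : ((tPath htree' x y).map fhom).IsPath :=
          Walk.map_isPath_of_injective hfhom_inj (tPath_isPath htree' x y)
        have h1 : tDist hG w x.1 y.1 = (((tPath htree' x y).map fhom).edges.map w).sum :=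
          tDist_eq hG w _ hmap
        rw [h1, Walk.edges_map, List.map_map]
        rfl
      have hcard' : Fintype.card {x : V // x ≠ v} = n - 1 := by
        have h1 : Fintype.card {x : V // x = v} = 1 := Fintype.card_subtype_eq v
        have := Fintype.card_subtype_compl (fun x : V => x = v)
        rw [h1, hcard] at this
        exact this
      obtain ⟨l', hnd', hmem', hcost'⟩ :=
        ih (n - 1) (by omega) _ G' hcard' htree' w' hw'
      -- weight split
      have hsplit : ∑ e ∈ G.edgeFinset, w e =
          ∑ e ∈ G.edgeFinset.filter (fun e => v ∈ e), w e +
          ∑ e ∈ G.edgeFinset.filter (fun e => v ∉ e), w e :=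
        (Finset.sum_filter_add_sum_filter_not _ _ _).symm
      have hinc : G.edgeFinset.filter (fun e => v ∈ e) = {s(v, u)} := by
        have hfi : G.edgeFinset.filter (fun e => v ∈ e) = G.incidenceFinset v := by
          ext e
          rw [mem_incidenceFinset, Finset.mem_filter, mem_edgeFinset]
          exact ⟨fun h => ⟨h.1, h.2⟩, fun h => ⟨h.1, h.2⟩⟩
        rw [hfi]
        have hcard1 : (G.incidenceFinset v).card = 1 := by
          rw [card_incidenceFinset_eq_degree]; exact hvdeg1
        obtain ⟨a, ha⟩ := Finset.card_eq_one.mp hcard1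
        have hmem : s(v, u) ∈ G.incidenceFinset v := by
          rw [mem_incidenceFinset]
          exact ⟨hadj_vu, Sym2.mem_mk_left v u⟩
        rw [ha] at hmem ⊢
        rw [Finset.mem_singleton.mp hmem]
      have himg : (G'.edgeFinset).image (Sym2.map Subtype.val) =
          G.edgeFinset.filter (fun e => v ∉ e) := by
        ext e
        constructor
        · intro h
          obtain ⟨e', he', rfl⟩ := Finset.mem_image.mp h
          induction e' using Sym2.ind with
          | _ a b =>
            have hadj : G.Adj a.1 b.1 := mem_edgeFinset.mp he'
            rw [Sym2.map_pair_eq]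
            rw [Finset.mem_filter, mem_edgeFinset]
            refine ⟨hadj, ?_⟩
            rw [Sym2.mem_iff]
            rintro (h | h)
            · exact a.2 h.symm
            · exact b.2 h.symm
        · intro h
          rw [Finset.mem_filter, mem_edgeFinset] at h
          obtain ⟨hadj, hv⟩ := h
          revert hadj hv
          induction e using Sym2.ind with
          | _ a b =>
            intro hadj hv
            rw [Sym2.mem_iff] at hv
            push_neg at hv
            refine Finset.mem_image.mpr ⟨s(⟨a, fun h => hv.1 h.symm⟩, ⟨b, fun h => hv.2 h.symm⟩),
              ?_, Sym2.map_pair_eq _ _ _⟩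
            rw [mem_edgeFinset]
            exact hadj
      have hinj2 : Function.Injective (Sym2.map (Subtype.val : {x : V // x ≠ v} → V)) :=
        (Function.Embedding.sym2Map ⟨Subtype.val, hval_inj⟩).injective
      have hsum2 : ∑ e ∈ G.edgeFinset.filter (fun e => v ∉ e), w e =
          ∑ e ∈ G'.edgeFinset, w' e := by
        rw [← himg, Finset.sum_image (fun x _ y _ h => hinj2 h)]
      -- assemble the tour
      set d := tDist hG w with hd
      have htri : ∀ a b c : V, d a c ≤ d a b + d b c := fun a b c =>
        tDist_triangle hG hw a b c
      set l'' := l'.map Subtype.val with hl''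
      have hnd'' : l''.Nodup := hnd'.map hval_inj
      have hcost'' : tourCost d l'' = tourCost (tDist htree' w') l' := by
        rw [hl'', tourCost_map]
        congr 1
        funext a b
        exact (hd' a b).symm
      have humem : u ∈ l'' := by
        rw [hl'', List.mem_map]
        exact ⟨⟨u, hune⟩, hmem' _, rfl⟩
      obtain ⟨l1, l2, hsplitl⟩ := List.append_of_mem humem
      set t := l2 ++ l1 with ht
      have hrot : tourCost d l'' = tourCost d (u :: t) := by
        rw [hsplitl, tourCost_append_comm l1 (u :: l2), ht]
        simp
      have hperm : l''.Perm (u :: t) := by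
        rw [hsplitl, ht]
        have : (u :: l2) ++ l1 = u :: (l2 ++ l1) := by simp
        rw [← this]
        exact List.perm_append_comm
      have hndrot : (u :: t).Nodup := hperm.nodup_iff.mp hnd''
      have hmemrot : ∀ x : V, x ≠ v → x ∈ u :: t := by
        intro x hx
        apply hperm.mem_iff.mp
        rw [hl'', List.mem_map]
        exact ⟨⟨x, hx⟩, hmem' _, rfl⟩
      have hvnot : v ∉ u :: t := by
        intro hv
        have : v ∈ l'' := hperm.mem_iff.mpr hv
        rw [hl'', List.mem_map] at this
        obtain ⟨a, _, ha⟩ := this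
        exact a.2 ha
      refine ⟨u :: v :: t, ?_, ?_, ?_⟩
      · rw [List.nodup_cons] at hndrot ⊢
        rw [List.nodup_cons]
        refine ⟨?_, ?_, hndrot.2⟩
        · rw [List.mem_cons]
          rintro (h | h)
          · exact hune h
          · exact hndrot.1 h
        · intro hv
          exact hvnot (List.mem_cons_of_mem u hv)
      · intro x
        by_cases hx : x = v
        · rw [hx]; simp
        · have hm := hmemrot x hx
          rw [List.mem_cons] at hm
          rcases hm with h | h
          · simp [h]
          · right; right; exact h
      · have hduv : d u v = w s(v, u) := by
          rw [hd, tDist_adj hG w hadj_vu.symm, Sym2.eq_swap]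
        have hdvu : d v u = w s(v, u) := by
          rw [hd, tDist_adj hG w hadj_vu]
        have hcosttour : tourCost d (u :: v :: t) = d u v + pCost d v t u := rfl
        have hins : pCost d v t u ≤ d v u + pCost d u t u := pCost_le_insert htri t v u u
        have hto : pCost d u t u = tourCost d (u :: t) := rfl
        have hfin : tourCost d (u :: t) ≤ 2 * ∑ e ∈ G'.edgeFinset, w' e := by
          rw [← hrot, hcost'']
          exact hcost'
        rw [hcosttour]
        calc d u v + pCost d v t u ≤ d u v + (d v u + pCost d u t u) := by linarith
        _ = w s(v, u) + w s(v, u) + tourCost d (u :: t) := by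
            rw [hduv, hdvu, hto]; ring
        _ ≤ w s(v, u) + w s(v, u) + 2 * ∑ e ∈ G'.edgeFinset, w' e := by linarith
        _ = 2 * (∑ e ∈ G.edgeFinset.filter (fun e => v ∈ e), w e +
              ∑ e ∈ G.edgeFinset.filter (fun e => v ∉ e), w e) := by
            rw [hinc, hsum2, Finset.sum_singleton]; ring
        _ = 2 * ∑ e ∈ G.edgeFinset, w e := by rw [← hsplit]

end Tour

section FrameTour
variable {M : Type} [Fintype M]

lemma formPerm_isCyclicOrder [DecidableEq M] {m : List M} (hnd : m.Nodup)
    (hmem : ∀ p : M, p ∈ m) : IsCyclicOrder m.formPerm := by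
  intro p q
  obtain ⟨i, hi, hip⟩ := List.getElem_of_mem (hmem p)
  obtain ⟨j, hj, hjq⟩ := List.getElem_of_mem (hmem q)
  refine ⟨(m.length - i) + j, ?_⟩
  rw [← hip, List.formPerm_pow_apply_getElem m hnd _ i hi]
  have hmod : (i + ((m.length - i) + j)) % m.length = j := by
    have h1 : i + ((m.length - i) + j) = m.length + j := by omega
    rw [h1, Nat.add_mod_left, Nat.mod_eq_of_lt hj]
  simp only [hmod]
  exact hjq

lemma sum_univ_eq_map_sum [DecidableEq M] {m : List M} (hnd : m.Nodup)
    (hmem : ∀ p : M, p ∈ m) (f : M → ℝ) : ∑ p : M, f p = (m.map f).sum := by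
  have huniv : (univ : Finset M) = m.toFinset := by ext p; simp [hmem p]
  rw [huniv, List.sum_toFinset f hnd]

lemma Frame.exists_cyclic_tour (F : Frame M) (w : Sym2 F.V → ℝ)
    (hw : ∀ e ∈ F.G.edgeFinset, 0 ≤ w e) :
    ∃ σ : Equiv.Perm M, IsCyclicOrder σ ∧
      ∑ p : M, tDist F.tree w (F.ι p) (F.ι (σ p)) ≤ 2 * F.weight w := by
  classical
  have hw' : ∀ e ∈ F.G.edgeSet, 0 ≤ w e := fun e he => hw e (mem_edgeFinset.mpr he)
  have hwnn : 0 ≤ F.weight w := Finset.sum_nonneg fun e he => hw e he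
  obtain ⟨l, hlnd, hlmem, hlcost⟩ := tree_tour (Fintype.card F.V) F.V F.G rfl F.tree w hw'
  have hlcost' : tourCost (tDist F.tree w) l ≤ 2 * F.weight w := hlcost
  set d := tDist F.tree w with hd
  have htri : ∀ a b c, d a c ≤ d a b + d b c := fun a b c => tDist_triangle F.tree hw' a b c
  rcases isEmpty_or_nonempty M with hM | hM
  · refine ⟨1, fun p q => isEmptyElim p, ?_⟩
    rw [Finset.univ_eq_empty, Finset.sum_empty]
    linarith
  · obtain ⟨p₀⟩ := hM
    obtain ⟨l1, l2, hsplit⟩ := List.append_of_mem (hlmem (F.ι p₀))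
    set lrot := F.ι p₀ :: (l2 ++ l1) with hlrot
    have hcostrot : tourCost d lrot = tourCost d l := by
      rw [hsplit, tourCost_append_comm l1 (F.ι p₀ :: l2)]
      simp [hlrot]
    have hperm : l.Perm lrot := by
      rw [hsplit, hlrot]
      have hx : (F.ι p₀ :: l2) ++ l1 = F.ι p₀ :: (l2 ++ l1) := by simp
      rw [← hx]
      exact List.perm_append_comm
    have hndrot : lrot.Nodup := hperm.nodup_iff.mp hlnd
    have hmemrot : ∀ x, x ∈ lrot := fun x => hperm.mem_iff.mp (hlmem x)
    set lM := F.ι p₀ :: (l2 ++ l1).filter (fun x => decide (x ∈ Set.range F.ι)) with hlM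
    have hsubM : List.Sublist lM lrot := List.Sublist.cons₂ _ List.filter_sublist
    have hcostM : tourCost d lM ≤ tourCost d lrot := by
      rw [hlM, hlrot, tourCost_cons, tourCost_cons]
      exact pCost_mono_sublist htri List.filter_sublist _ _
    have hndM : lM.Nodup := hndrot.sublist hsubM
    have hrange : ∀ x ∈ lM, x ∈ Set.range F.ι := by
      intro x hx
      rw [hlM, List.mem_cons] at hx
      rcases hx with rfl | hx
      · exact ⟨p₀, rfl⟩
      · simpa using (List.mem_filter.mp hx).2
    haveI : Nonempty M := ⟨p₀⟩
    set g := Function.invFun F.ι with hg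
    have hgl : Function.LeftInverse g F.ι := Function.leftInverse_invFun F.inj
    set m := lM.map g with hm
    have hlMm : m.map F.ι = lM := by
      rw [hm, List.map_map]
      conv_rhs => rw [← List.map_id lM]
      apply List.map_congr_left
      intro x hx
      obtain ⟨p, rfl⟩ := hrange x hx
      simp [Function.comp, hgl p]
    have hmnd : m.Nodup := by
      have h := hlMm ▸ hndM
      exact h.of_map
    have hmmem : ∀ p : M, p ∈ m := by
      intro p
      have hι : F.ι p ∈ lM := by
        have hιrot : F.ι p ∈ lrot := hmemrot _
        rw [hlrot, List.mem_cons] at hιrot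
        rcases hιrot with h | h
        · rw [hlM, List.mem_cons]; left; exact h
        · rw [hlM, List.mem_cons]; right
          rw [List.mem_filter]
          exact ⟨h, by simp⟩
      rw [← hlMm, List.mem_map] at hι
      obtain ⟨q, hq, hqe⟩ := hι
      rwa [← F.inj hqe]
    refine ⟨m.formPerm, formPerm_isCyclicOrder hmnd hmmem, ?_⟩
    set σ := m.formPerm with hσ
    set dM : M → M → ℝ := fun p q => d (F.ι p) (F.ι q) with hdM
    have hsum : ∑ p : M, d (F.ι p) (F.ι (σ p)) = (m.map (fun p => dM p (σ p))).sum :=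
      sum_univ_eq_map_sum hmnd hmmem _
    have h1 : (m.map (fun p => dM p (σ p))).sum = tourCost dM m := by
      rcases hm' : m with _ | ⟨a, t⟩
      · simp [tourCost]
      · rw [hσ, hm']
        rw [map_formPerm_eq_zip a t (hm' ▸ hmnd), ← pCost_eq_zip_sum]
        rfl
    have h2 : tourCost dM m = tourCost d lM := by
      have hx := tourCost_map (d := d) (f := F.ι) m
      rw [hlMm] at hx
      rw [hdM]
      exact hx.symm
    calc ∑ p : M, d (F.ι p) (F.ι (σ p)) = tourCost d lM := by rw [hsum, h1, h2]
    _ ≤ tourCost d lrot := hcostM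
    _ = tourCost d l := hcostrot
    _ ≤ 2 * F.weight w := hlcost'

end FrameTour

theorem stmt11 {M : Type} [Fintype M] (ρ : M → M → ℝ) (hρ : IsPseudoMetric ρ)
    (hadd : IsAdditive ρ) :
    mf ρ = halfPerimSpace ρ := by
  classical
  obtain ⟨F₀, w₀, hgen⟩ := hadd
  have hfill : F₀.IsFilling w₀ ρ := ⟨hgen.1, fun p q => (hgen.2 p q).ge⟩
  have hmf_ne : {x | ∃ F : Frame M, ∃ w : Sym2 F.V → ℝ, F.IsFilling w ρ ∧ F.weight w = x}.Nonempty :=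
    ⟨F₀.weight w₀, F₀, w₀, hfill, rfl⟩
  have hmf_bdd : BddBelow {x | ∃ F : Frame M, ∃ w : Sym2 F.V → ℝ, F.IsFilling w ρ ∧ F.weight w = x} := by
    refine ⟨0, ?_⟩
    rintro x ⟨F, w, hf, rfl⟩
    exact Finset.sum_nonneg fun e he => hf.1 e he
  obtain ⟨σ₀, hσ₀cyc, hσ₀⟩ := F₀.exists_cyclic_tour w₀ hgen.1
  have hhp_ne : {x | ∃ σ : Equiv.Perm M, IsCyclicOrder σ ∧ x = (∑ p : M, ρ p (σ p)) / 2}.Nonempty :=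
    ⟨_, σ₀, hσ₀cyc, rfl⟩
  have hhp_bdd : BddBelow {x | ∃ σ : Equiv.Perm M, IsCyclicOrder σ ∧ x = (∑ p : M, ρ p (σ p)) / 2} := by
    refine ⟨0, ?_⟩
    rintro x ⟨σ, hσ, rfl⟩
    have : 0 ≤ ∑ p : M, ρ p (σ p) := Finset.sum_nonneg fun p _ => hρ.nonneg p (σ p)
    linarith
  rw [mf, halfPerimSpace]
  apply le_antisymm
  · apply le_csInf hhp_ne
    rintro x ⟨σ, hσcyc, rfl⟩
    have hge := two_weight_le_sum_tDist F₀ hgen.1 hσcyc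
    have heq : ∑ p : M, tDist F₀.tree w₀ (F₀.ι p) (F₀.ι (σ p)) = ∑ p : M, ρ p (σ p) :=
      Finset.sum_congr rfl fun p _ => hgen.2 p (σ p)
    have h1 : sInf {x | ∃ F : Frame M, ∃ w : Sym2 F.V → ℝ, F.IsFilling w ρ ∧ F.weight w = x}
        ≤ F₀.weight w₀ := csInf_le hmf_bdd ⟨F₀, w₀, hfill, rfl⟩
    rw [heq] at hge
    linarith
  · apply le_csInf hmf_ne
    rintro x ⟨F, w, hf, rfl⟩
    obtain ⟨σ, hσcyc, hσle⟩ := F.exists_cyclic_tour w hf.1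
    have hρle : ∑ p : M, ρ p (σ p) ≤ ∑ p : M, tDist F.tree w (F.ι p) (F.ι (σ p)) :=
      Finset.sum_le_sum fun p _ => hf.2 p (σ p)
    have hle : sInf {x | ∃ σ : Equiv.Perm M, IsCyclicOrder σ ∧ x = (∑ p : M, ρ p (σ p)) / 2}
        ≤ (∑ p : M, ρ p (σ p)) / 2 := csInf_le hhp_bdd ⟨σ, hσcyc, rfl⟩
    linarith
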